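/- For every λ ∈ k \ {0}, the Lie algebra O(λ) is not perfect: the derived subalgebra [O(λ), O(λ)] is a proper subspace of O(λ). In particular, O(λ) is not a simple Lie algebra. -/

import Mathlib

/-- The linear functional values on the basis: `f j = j * lam ^ ((j-1)/2)` for odd `j ≥ 1`,
and `0` otherwise. -/
noncomputable def OOf {k : Type*} [Field k] (lam : k) (j : ℤ) : k :=
  if 1 ≤ j ∧ Odd j then (j : k) * lam ^ ((j - 1) / 2) else 0

lemma OOf_key {k : Type*} [Field k] (lam : k) (hlam : lam ≠ 0)
    (n m : ℤ) (hn : 1 ≤ n) (hm : 1 ≤ m) :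
    ((n - m : ℤ) : k) * OOf lam (n + m) - lam ^ m * ((n + m : ℤ) : k) * OOf lam (n - m)
      - lam ^ n * ((-n - m : ℤ) : k) * OOf lam (m - n)
      + lam ^ n * lam ^ m * ((m - n : ℤ) : k) * OOf lam (-n - m) = 0 := by
  have h0 : OOf lam (-n - m) = 0 := by
    rw [OOf, if_neg]; rintro ⟨h, -⟩; omega
  rcases lt_trichotomy n m with h | h | h
  · have h1 : OOf lam (n - m) = 0 := by
      rw [OOf, if_neg]; rintro ⟨h2, -⟩; omega
    rw [h0, h1]
    by_cases hodd : (n + m) % 2 = 1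
    · rw [OOf, if_pos ⟨by omega, Int.odd_iff.mpr hodd⟩,
        OOf, if_pos ⟨by omega, Int.odd_iff.mpr (by omega)⟩]
      have he : (n + m - 1) / 2 = n + (m - n - 1) / 2 := by omega
      rw [he, zpow_add₀ hlam]
      push_cast
      ring
    · rw [OOf, if_neg, OOf, if_neg]
      · ring
      · rintro ⟨-, h2⟩; rw [Int.odd_iff] at h2; omega
      · rintro ⟨-, h2⟩; rw [Int.odd_iff] at h2; omega
  · subst h
    have h1 : OOf lam (n - n) = 0 := by
      rw [OOf, if_neg]; rintro ⟨h2, -⟩; omega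
    rw [h0, h1, sub_self]
    push_cast
    ring
  · have h1 : OOf lam (m - n) = 0 := by
      rw [OOf, if_neg]; rintro ⟨h2, -⟩; omega
    rw [h0, h1]
    by_cases hodd : (n + m) % 2 = 1
    · rw [OOf, if_pos ⟨by omega, Int.odd_iff.mpr hodd⟩,
        OOf, if_pos ⟨by omega, Int.odd_iff.mpr (by omega)⟩]
      have he : (n + m - 1) / 2 = m + (n - m - 1) / 2 := by omega
      rw [he, zpow_add₀ hlam]
      push_cast
      ring
    · rw [OOf, if_neg, OOf, if_neg]
      · ring
      · rintro ⟨-, h2⟩; rw [Int.odd_iff] at h2; omega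
      · rintro ⟨-, h2⟩; rw [Int.odd_iff] at h2; omega

/-- Let `k` be a field of characteristic zero, `W` the Witt algebra (basis `L n`, `n : ℤ`,
`⁅L n, L m⁆ = (n-m) • L (n+m)`), and `lam ∈ k`, `lam ≠ 0`.  `O(lam)` is the Lie subalgebra of
`W` spanned by `{L n - lamⁿ • L (-n) : n ≥ 1}`.  Then `O(lam)` is not perfect — its derived
subalgebra `⁅O(lam), O(lam)⁆` (the first term of the derived series) is a proper subspace —
and in particular `O(lam)` is not a simple Lie algebra. -/
theorem O_lam_not_perfect_not_simple
    {k : Type*} [Field k] [CharZero k]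
    {W : Type*} [LieRing W] [LieAlgebra k W]
    (L : ℤ → W)
    (hLindep : LinearIndependent k L)
    (hLspan : Submodule.span k (Set.range L) = ⊤)
    (hLbracket : ∀ n m : ℤ, ⁅L n, L m⁆ = ((n - m : ℤ) : k) • L (n + m))
    (lam : k) (hlam : lam ≠ 0)
    (H : LieSubalgebra k W)
    (hH : (H : Submodule k W) =
      Submodule.span k {x : W | ∃ n : ℤ, 1 ≤ n ∧ x = L n - lam ^ n • L (-n)}) :
    LieAlgebra.derivedSeries k (↥H) 1 ≠ ⊤ ∧ ¬ LieAlgebra.IsSimple k (↥H) := by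
  classical
  set S : Set W := {x : W | ∃ n : ℤ, 1 ≤ n ∧ x = L n - lam ^ n • L (-n)} with hSdef
  let B : Module.Basis ℤ k W := Module.Basis.mk hLindep (by rw [hLspan])
  let φ : W →ₗ[k] k := B.constr k (OOf lam)
  have hφL : ∀ j : ℤ, φ (L j) = OOf lam j := by
    intro j
    have hB : B j = L j := Module.Basis.mk_apply hLindep _ j
    rw [← hB]
    exact B.constr_basis k (OOf lam) j
  -- φ kills brackets of generators
  have hgen : ∀ x ∈ S, ∀ y ∈ S, φ ⁅x, y⁆ = 0 := by
    rintro _ ⟨n, hn, rfl⟩ _ ⟨m, hm, rfl⟩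
    rw [lie_sub, sub_lie, sub_lie, lie_smul, smul_lie, smul_lie, lie_smul, smul_smul,
      hLbracket, hLbracket, hLbracket, hLbracket]
    simp only [map_sub, map_smul, hφL, smul_eq_mul]
    rw [show n + -m = n - m by ring, show -n + m = m - n by ring,
      show -n + -m = -n - m by ring]
    have key := OOf_key lam hlam n m hn hm
    push_cast at key ⊢
    linear_combination key
  -- φ kills all brackets of elements of the span
  have hbr1 : ∀ x ∈ Submodule.span k S, ∀ y ∈ S, φ ⁅x, y⁆ = 0 := by
    intro x hx
    induction hx using Submodule.span_induction with
    | mem x hxS => exact hgen x hxS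
    | zero => intro y _; simp
    | add a b _ _ ha hb =>
      intro y hy
      rw [add_lie, map_add, ha y hy, hb y hy, add_zero]
    | smul c a _ ha =>
      intro y hy
      rw [smul_lie, map_smul, ha y hy, smul_zero]
  have hbr : ∀ x ∈ Submodule.span k S, ∀ y ∈ Submodule.span k S, φ ⁅x, y⁆ = 0 := by
    intro x hx y hy
    induction hy using Submodule.span_induction with
    | mem y hyS => exact hbr1 x hx y hyS
    | zero => simp
    | add a b _ _ ha hb => rw [lie_add, map_add, ha, hb, add_zero]
    | smul c a _ ha => rw [lie_smul, map_smul, ha, smul_zero]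
  have hmemspan : ∀ z : H, (z : W) ∈ Submodule.span k S := by
    intro z
    rw [← hH]
    exact z.2
  -- the kernel of φ restricted to H, as a Lie submodule
  let ψ : H →ₗ[k] k := φ ∘ₗ (H : Submodule k W).subtype
  let N : LieSubmodule k H H :=
    { LinearMap.ker ψ with
      lie_mem := by
        intro x m _
        show ⁅x, m⁆ ∈ LinearMap.ker ψ
        rw [LinearMap.mem_ker]
        show φ ((⁅x, m⁆ : H) : W) = 0
        rw [LieSubalgebra.coe_bracket]
        exact hbr _ (hmemspan x) _ (hmemspan m) }
  -- the derived series is contained in N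
  have hDN : LieAlgebra.derivedSeries k (↥H) 1 ≤ N := by
    rw [LieAlgebra.derivedSeries_def, LieAlgebra.derivedSeriesOfIdeal_succ,
      LieAlgebra.derivedSeriesOfIdeal_zero, LieSubmodule.lieIdeal_oper_eq_span,
      LieSubmodule.lieSpan_le]
    rintro _ ⟨x, m, rfl⟩
    show φ ((⁅(x : H), (m : H)⁆ : H) : W) = 0
    rw [LieSubalgebra.coe_bracket]
    exact hbr _ (hmemspan _) _ (hmemspan _)
  -- the witness element `O_1 = L 1 - lam • L (-1)` with `ψ = 1`
  have hO1mem : L 1 - lam ^ (1 : ℤ) • L (-1) ∈ Submodule.span k S :=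
    Submodule.subset_span ⟨1, le_refl 1, rfl⟩
  have hO1H : L 1 - lam ^ (1 : ℤ) • L (-1) ∈ H := by
    have : L 1 - lam ^ (1 : ℤ) • L (-1) ∈ (H : Submodule k W) := by rw [hH]; exact hO1mem
    exact this
  set x₀ : H := ⟨L 1 - lam ^ (1 : ℤ) • L (-1), hO1H⟩ with hx₀
  have hψx₀ : ψ x₀ = 1 := by
    show φ (L 1 - lam ^ (1 : ℤ) • L (-1)) = 1
    rw [map_sub, map_smul, hφL, hφL]
    rw [OOf, if_pos ⟨le_refl 1, ⟨0, by ring⟩⟩, OOf, if_neg (by rintro ⟨h, -⟩; omega)]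
    norm_num
  have hNne : x₀ ∉ N := by
    intro hx
    have : ψ x₀ = 0 := hx
    rw [hψx₀] at this
    exact one_ne_zero this
  have hne : LieAlgebra.derivedSeries k (↥H) 1 ≠ ⊤ := by
    intro htop
    apply hNne
    exact hDN (htop ▸ LieSubmodule.mem_top x₀)
  refine ⟨hne, ?_⟩
  intro hs
  rcases hs.eq_bot_or_eq_top (LieAlgebra.derivedSeries k (↥H) 1) with hbot | htop
  · -- derived series = ⊥ means H is abelian, contradicting non_abelian
    apply hs.non_abelian
    constructor
    intro x y
    have hxy : ⁅x, y⁆ ∈ LieAlgebra.derivedSeries k (↥H) 1 := by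
      rw [LieAlgebra.derivedSeries_def, LieAlgebra.derivedSeriesOfIdeal_succ,
        LieAlgebra.derivedSeriesOfIdeal_zero]
      exact LieSubmodule.lie_mem_lie (LieSubmodule.mem_top x) (LieSubmodule.mem_top y)
    rw [hbot] at hxy
    exact (LieSubmodule.mem_bot _).mp hxy
  · exact hne htop
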